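/- Let ρ be the 2×2 diagonal matrix diag(1/|q_0|^2, 1/|q_1|^2) with q_0, q_1 nonzero complex numbers and |q_0| ≠ |q_1|. Then there do not exist three 2×2 unitary matrices U_1, U_2, U_3 such that Tr(U_n ρ U_m†) = 0 for all n ≠ m in {1,2,3}. -/

import Mathlib

open Matrix

private lemma trace_formula (a b : ℂ) (A B : Matrix (Fin 2) (Fin 2) ℂ) :
    (A * Matrix.diagonal ![a, b] * Bᴴ).trace
      = a * (Bᴴ * A) 0 0 + b * (Bᴴ * A) 1 1 := by
  simp [Matrix.trace, Matrix.mul_apply, Fin.sum_univ_two, Matrix.diagonal,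
    Matrix.conjTranspose_apply]
  ring

private lemma key (a b : ℝ) (ha : 0 < a) (hb : 0 < b) (hab : a ≠ b)
    (W : Matrix (Fin 2) (Fin 2) ℂ) (hW : W ∈ Matrix.unitaryGroup (Fin 2) ℂ)
    (h : (a : ℂ) * W 0 0 + (b : ℂ) * W 1 1 = 0) :
    W 0 0 = 0 ∧ W 1 1 = 0 ∧ ‖W 0 1‖ = 1 ∧ ‖W 1 0‖ = 1 := by
  have hWW : W * star W = 1 := Matrix.mem_unitaryGroup_iff.mp hW
  have hWW' : star W * W = 1 := Matrix.mem_unitaryGroup_iff'.mp hW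
  have e1 := congrArg (fun M => M 0 0) hWW
  have e2 := congrArg (fun M => M 1 1) hWW
  have e3 := congrArg (fun M => M 0 0) hWW'
  simp only [Matrix.mul_apply, Fin.sum_univ_two, Matrix.star_eq_conjTranspose,
    Matrix.conjTranspose_apply, Matrix.one_apply_eq, RCLike.star_def,
    Complex.mul_conj, ← Complex.normSq_eq_conj_mul_self] at e1 e2 e3
  have r1 : Complex.normSq (W 0 0) + Complex.normSq (W 0 1) = 1 := by exact_mod_cast e1
  have r2 : Complex.normSq (W 1 0) + Complex.normSq (W 1 1) = 1 := by exact_mod_cast e2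
  have r3 : Complex.normSq (W 0 0) + Complex.normSq (W 1 0) = 1 := by exact_mod_cast e3
  have hns : Complex.normSq ((a : ℂ) * W 0 0) = Complex.normSq ((b : ℂ) * W 1 1) := by
    have : (a : ℂ) * W 0 0 = -((b : ℂ) * W 1 1) := eq_neg_of_add_eq_zero_left h
    rw [this, Complex.normSq_neg]
  rw [Complex.normSq_mul, Complex.normSq_mul, Complex.normSq_ofReal,
    Complex.normSq_ofReal] at hns
  have hsame : Complex.normSq (W 1 1) = Complex.normSq (W 0 0) := by linarith
  have h00 : Complex.normSq (W 0 0) = 0 := by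
    rw [hsame] at hns
    have hfac : (b * b - a * a) * Complex.normSq (W 0 0) = 0 := by linear_combination -hns
    rcases mul_eq_zero.mp hfac with hc | hc
    · exact absurd ((mul_self_inj ha.le hb.le).mp (by linarith)) hab
    · exact hc
  have h11 : Complex.normSq (W 1 1) = 0 := by rw [hsame]; exact h00
  have w00 : W 0 0 = 0 := Complex.normSq_eq_zero.mp h00
  have w11 : W 1 1 = 0 := Complex.normSq_eq_zero.mp h11
  refine ⟨w00, w11, ?_, ?_⟩
  · rw [Complex.norm_def]
    rw [show Complex.normSq (W 0 1) = 1 by nlinarith]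
    exact Real.sqrt_one
  · rw [Complex.norm_def]
    rw [show Complex.normSq (W 1 0) = 1 by nlinarith]
    exact Real.sqrt_one

theorem stmt_7 (q0 q1 : ℂ) (h0 : q0 ≠ 0) (h1 : q1 ≠ 0)
    (hne : ‖q0‖ ≠ ‖q1‖)
    (ρ : Matrix (Fin 2) (Fin 2) ℂ)
    (hρ : ρ = Matrix.diagonal ![((‖q0‖ ^ 2 : ℝ) : ℂ)⁻¹,
                                ((‖q1‖ ^ 2 : ℝ) : ℂ)⁻¹]) :
    ¬ ∃ U : Fin 3 → Matrix (Fin 2) (Fin 2) ℂ,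
        (∀ i, U i ∈ Matrix.unitaryGroup (Fin 2) ℂ) ∧
        (∀ n m, n ≠ m → (U n * ρ * (U m)ᴴ).trace = 0) := by
  set a : ℝ := (‖q0‖ ^ 2)⁻¹ with ha_def
  set b : ℝ := (‖q1‖ ^ 2)⁻¹ with hb_def
  have habs0 : 0 < ‖q0‖ := norm_pos_iff.mpr h0
  have habs1 : 0 < ‖q1‖ := norm_pos_iff.mpr h1
  have ha : 0 < a := by positivity
  have hb : 0 < b := by positivity
  have hab : a ≠ b := by
    intro hEq
    apply hne
    have h2 : ‖q0‖ ^ 2 = ‖q1‖ ^ 2 := by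
      have := congrArg (·⁻¹) hEq
      simpa [ha_def, hb_def] using this
    nlinarith
  have hρ' : ρ = Matrix.diagonal ![(a : ℂ), (b : ℂ)] := by
    rw [hρ, ha_def, hb_def]
    push_cast
    rfl
  rintro ⟨U, hU, htr⟩
  -- the pairwise "Gram" matrices
  have mem : ∀ n m : Fin 3, (U m)ᴴ * U n ∈ Matrix.unitaryGroup (Fin 2) ℂ := by
    intro n m
    rw [← Matrix.star_eq_conjTranspose]
    exact mul_mem (Unitary.star_mem (hU m)) (hU n)
  have cond : ∀ n m : Fin 3, n ≠ m →
      ((U m)ᴴ * U n) 0 0 = 0 ∧ ((U m)ᴴ * U n) 1 1 = 0 ∧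
      ‖((U m)ᴴ * U n) 0 1‖ = 1 ∧ ‖((U m)ᴴ * U n) 1 0‖ = 1 := by
    intro n m hnm
    refine key a b ha hb hab _ (mem n m) ?_
    have := htr n m hnm
    rw [hρ', trace_formula] at this
    exact this
  obtain ⟨w01_00, -, -, w01_10⟩ := cond 0 1 (by decide)
  obtain ⟨w02_00, -, -, -⟩ := cond 0 2 (by decide)
  obtain ⟨w12_00, -, w12_01, -⟩ := cond 1 2 (by decide)
  have hsplit : (U 2)ᴴ * U 0 = ((U 2)ᴴ * U 1) * ((U 1)ᴴ * U 0) := by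
    have hone : U 1 * (U 1)ᴴ = 1 := by
      rw [← Matrix.star_eq_conjTranspose]
      exact Matrix.mem_unitaryGroup_iff.mp (hU 1)
    calc (U 2)ᴴ * U 0 = (U 2)ᴴ * (U 1 * (U 1)ᴴ) * U 0 := by rw [hone, mul_one]
    _ = ((U 2)ᴴ * U 1) * ((U 1)ᴴ * U 0) := by simp only [mul_assoc]
  have hentry : (((U 2)ᴴ * U 1) * ((U 1)ᴴ * U 0)) 0 0 = 0 := by
    rw [← hsplit]; exact w02_00
  rw [Matrix.mul_apply, Fin.sum_univ_two, w12_00, zero_mul, zero_add] at hentry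
  have : ‖((U 2)ᴴ * U 1) 0 1 * ((U 1)ᴴ * U 0) 1 0‖ = 1 := by
    rw [norm_mul, w12_01, w01_10, one_mul]
  rw [hentry] at this
  simp at this
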